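/- Let t₀ > 0, α > 1, and h : [t₀, ∞) → ℝ continuously differentiable, bounded below, twice differentiable a.e., satisfying t h''(t) + α h'(t) ≤ g(t) for almost all t ≥ t₀, where g ∈ L¹([t₀,∞)) is nonnegative. Then lim_{t→∞} h(t) exists (and is finite). -/

import Mathlib

open MeasureTheory

open Set

lemma parts_aux (a b : ℝ) (hab : a ≤ b) (k u u' : ℝ → ℝ)
    (hk : IntegrableOn k (Set.Ioc a b))
    (hu : ∀ t ∈ Set.Icc a b, HasDerivAt u (u' t) t)
    (hu' : ContinuousOn u' (Set.Icc a b)) :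
    ∫ t in a..b, u' t * (∫ s in a..t, k s) = ∫ s in a..b, k s * (u b - u s) := by
  set μ := volume.restrict (Set.Ioc a b) with hμdef
  haveI : IsFiniteMeasure μ := ⟨by
    rw [Measure.restrict_apply_univ]; exact measure_Ioc_lt_top⟩
  -- bound on u'
  obtain ⟨C, hC⟩ := (isCompact_Icc : IsCompact (Set.Icc a b)).exists_bound_of_continuousOn hu'
  set f : ℝ → ℝ → ℝ := fun t s => u' t * (Set.Ioc a t).indicator k s with hfdef
  have hu'm : AEStronglyMeasurable u' μ :=
    (hu'.mono Set.Ioc_subset_Icc_self).aestronglyMeasurable measurableSet_Ioc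
  have haem2 : ∀ᵐ p ∂(μ.prod μ), p.2 ∈ Set.Ioc a b := by
    apply Measure.QuasiMeasurePreserving.ae (Measure.quasiMeasurePreserving_snd)
    exact ae_restrict_mem measurableSet_Ioc
  have hmeas : AEStronglyMeasurable (Function.uncurry f) (μ.prod μ) := by
    have h1 : AEStronglyMeasurable (fun p : ℝ × ℝ => u' p.1 * k p.2) (μ.prod μ) :=
      (hu'm.comp_quasiMeasurePreserving Measure.quasiMeasurePreserving_fst).mul
        (hk.aestronglyMeasurable.comp_quasiMeasurePreserving Measure.quasiMeasurePreserving_snd)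
    have h2 : AEStronglyMeasurable
        ({p : ℝ × ℝ | p.2 ≤ p.1}.indicator (fun p => u' p.1 * k p.2)) (μ.prod μ) :=
      h1.indicator (measurableSet_le measurable_snd measurable_fst)
    apply h2.congr
    filter_upwards [haem2] with p hp
    simp only [Function.uncurry, hfdef, Set.indicator_apply, Set.mem_Ioc, Set.mem_setOf_eq]
    by_cases hle : p.2 ≤ p.1
    · simp [hle, hp.1]
    · simp [hle]
  have hint : Integrable (Function.uncurry f) (μ.prod μ) := by
    rw [MeasureTheory.integrable_prod_iff hmeas]
    constructor
    · refine Filter.Eventually.of_forall fun t => ?_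
      exact ((hk.indicator measurableSet_Ioc).const_mul (u' t))
    · have hbm : AEStronglyMeasurable (fun t => ∫ s, ‖f t s‖ ∂μ) μ :=
        hmeas.norm.integral_prod_right'
      refine (integrable_const (C * ∫ s, ‖k s‖ ∂μ)).mono' hbm ?_
      filter_upwards [ae_restrict_mem measurableSet_Ioc] with t ht
      have hC0 : 0 ≤ C := le_trans (norm_nonneg _) (hC t (Set.Ioc_subset_Icc_self ht))
      have h1 : ∀ s, ‖f t s‖ ≤ C * ‖k s‖ := by
        intro s
        simp only [hfdef, norm_mul]
        rcases Set.indicator_eq_zero_or_self (Set.Ioc a t) k s with h | h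
        · rw [h]; simp only [norm_zero, mul_zero]
          positivity
        · rw [h]
          exact mul_le_mul_of_nonneg_right (hC t (Set.Ioc_subset_Icc_self ht)) (norm_nonneg _)
      calc ‖∫ s, ‖f t s‖ ∂μ‖ ≤ ∫ s, C * ‖k s‖ ∂μ := by
            rw [Real.norm_of_nonneg (integral_nonneg fun s => norm_nonneg _)]
            exact integral_mono_of_nonneg (Filter.Eventually.of_forall fun s => norm_nonneg _)
              (hk.norm.const_mul C) (Filter.Eventually.of_forall h1)
        _ = C * ∫ s, ‖k s‖ ∂μ := integral_const_mul _ _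
  have hswap := MeasureTheory.integral_integral_swap hint
  -- LHS identification
  have hL : ∫ t, (∫ s, f t s ∂μ) ∂μ = ∫ t in a..b, u' t * (∫ s in a..t, k s) := by
    rw [intervalIntegral.integral_of_le hab]
    apply setIntegral_congr_fun measurableSet_Ioc
    intro t ht
    show ∫ s, f t s ∂μ = u' t * ∫ s in a..t, k s
    have heq : ∫ s, f t s ∂μ = u' t * ∫ s, (Set.Ioc a t).indicator k s ∂μ := by
      simp only [hfdef]; exact integral_const_mul _ _
    rw [heq, hμdef, integral_indicator measurableSet_Ioc, Measure.restrict_restrict measurableSet_Ioc,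
      Set.inter_eq_left.mpr (Set.Ioc_subset_Ioc_right ht.2), intervalIntegral.integral_of_le ht.1.le]
  -- RHS identification
  have hR : ∫ s, (∫ t, f t s ∂μ) ∂μ = ∫ s in a..b, k s * (u b - u s) := by
    rw [intervalIntegral.integral_of_le hab]
    apply setIntegral_congr_fun measurableSet_Ioc
    intro s hs
    have hfs : ∀ t, f t s = (Set.Ici s).indicator (fun t' => u' t' * k s) t := by
      intro t
      simp only [hfdef, Set.indicator_apply, Set.mem_Ioc, Set.mem_Ici]
      by_cases hts : s ≤ t
      · simp [hts, hs.1]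
      · simp [hts]
    simp only [hfs]
    rw [hμdef, integral_indicator measurableSet_Ici, Measure.restrict_restrict measurableSet_Ici]
    have hset : Set.Ici s ∩ Set.Ioc a b = Set.Icc s b := by
      ext x; simp only [Set.mem_inter_iff, Set.mem_Ici, Set.mem_Ioc, Set.mem_Icc]
      constructor
      · rintro ⟨h1, _, h3⟩; exact ⟨h1, h3⟩
      · rintro ⟨h1, h2⟩; exact ⟨h1, lt_of_lt_of_le hs.1 h1, h2⟩
    rw [hset]
    have : ∫ t in Set.Icc s b, u' t * k s = (∫ t in Set.Icc s b, u' t) * k s := by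
      rw [← integral_mul_const]
    rw [this, integral_Icc_eq_integral_Ioc, ← intervalIntegral.integral_of_le hs.2]
    have hftc : ∫ t in s..b, u' t = u b - u s := by
      apply intervalIntegral.integral_eq_sub_of_hasDerivAt
      · intro x hx
        rw [Set.uIcc_of_le hs.2] at hx
        exact hu x ⟨le_trans hs.1.le hx.1, hx.2⟩
      · apply ContinuousOn.intervalIntegrable
        rw [Set.uIcc_of_le hs.2]
        exact hu'.mono (Set.Icc_subset_Icc hs.1.le le_rfl)
    rw [hftc, mul_comm]
  rw [← hL, hswap, hR]

lemma caseA_key (t₀ : ℝ) (ht₀ : 0 < t₀) (α : ℝ) (hα : 1 < α)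
    (h' h'' g : ℝ → ℝ)
    (hc : ContinuousOn h' (Set.Ici t₀))
    (hfund : ∀ t ∈ Set.Ici t₀, h' t = h' t₀ + ∫ s in t₀..t, h'' s)
    (hg0 : ∀ t, 0 ≤ g t)
    (hgint : IntegrableOn g (Set.Ici t₀))
    (hineq : ∀ᵐ t ∂(volume.restrict (Set.Ici t₀)), t * h'' t + α * h' t ≤ g t)
    (hA : ∀ T, t₀ ≤ T → IntervalIntegrable h'' volume t₀ T)
    (T : ℝ) (hT : t₀ ≤ T) :
    T ^ α * h' T ≤ t₀ ^ α * h' t₀ + ∫ t in t₀..T, t ^ (α-1) * g t := by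
  set c := h' t₀ with hc0
  have hpos : ∀ x ∈ Set.Icc t₀ T, (0:ℝ) < x := fun x hx => lt_of_lt_of_le ht₀ hx.1
  have hposIoc : ∀ x ∈ Set.Ioc t₀ T, (0:ℝ) < x := fun x hx => lt_trans ht₀ hx.1
  have hcont_pow : ∀ (e : ℝ), ContinuousOn (fun t : ℝ => t ^ e) (Set.Icc t₀ T) :=
    fun e => continuousOn_id.rpow_const (fun x hx => Or.inl (ne_of_gt (hpos x hx)))
  have hk : IntegrableOn h'' (Set.Ioc t₀ T) :=
    (intervalIntegrable_iff_integrableOn_Ioc_of_le hT).mp (hA T hT)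
  have hu1 : ∀ x ∈ Set.Icc t₀ T, HasDerivAt (fun t : ℝ => t ^ α) (α * x ^ (α-1)) x :=
    fun x hx => Real.hasDerivAt_rpow_const (Or.inl (ne_of_gt (hpos x hx)))
  have P1 := parts_aux t₀ T hT h'' (fun t => t ^ α) (fun t => α * t ^ (α-1)) hk hu1
    (continuousOn_const.mul (hcont_pow (α-1)))
  -- rewrite LHS of P1
  have L1 : (∫ t in t₀..T, (α * t ^ (α-1)) * (∫ s in t₀..t, h'' s))
      = ∫ t in t₀..T, (α * t ^ (α-1) * h' t - c * (α * t ^ (α-1))) := by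
    apply intervalIntegral.integral_congr
    intro t ht
    rw [Set.uIcc_of_le hT] at ht
    have := hfund t ht.1
    simp only
    rw [show (∫ s in t₀..t, h'' s) = h' t - c by rw [this]; ring]
    ring
  have ih' : IntervalIntegrable (fun t => α * t ^ (α-1) * h' t) volume t₀ T :=
    ContinuousOn.intervalIntegrable_of_Icc hT
      ((continuousOn_const.mul (hcont_pow (α-1))).mul (hc.mono (fun x hx => hx.1)))
  have i3' : IntervalIntegrable (fun t : ℝ => α * t ^ (α-1)) volume t₀ T :=
    ContinuousOn.intervalIntegrable_of_Icc hT (continuousOn_const.mul (hcont_pow (α-1)))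
  have L2 : (∫ t in t₀..T, (α * t ^ (α-1) * h' t - c * (α * t ^ (α-1))))
      = (∫ t in t₀..T, α * t ^ (α-1) * h' t) - c * (∫ t in t₀..T, α * t ^ (α-1)) := by
    rw [intervalIntegral.integral_sub ih' (i3'.const_mul c),
      intervalIntegral.integral_const_mul]
  have I3 : (∫ t in t₀..T, α * t ^ (α-1)) = T ^ α - t₀ ^ α := by
    apply intervalIntegral.integral_eq_sub_of_hasDerivAt
    · intro x hx
      rw [Set.uIcc_of_le hT] at hx
      exact hu1 x hx
    · exact i3'
  -- rewrite RHS of P1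
  have i2 : IntegrableOn (fun s => h'' s * s ^ α) (Set.Ioc t₀ T) := by
    apply Integrable.mono' (hk.norm.mul_const (T ^ α))
    · exact hk.aestronglyMeasurable.mul
        (((hcont_pow α).mono Set.Ioc_subset_Icc_self).aestronglyMeasurable measurableSet_Ioc)
    · filter_upwards [ae_restrict_mem measurableSet_Ioc] with s hs
      rw [norm_mul, Real.norm_of_nonneg (Real.rpow_nonneg (hposIoc s hs).le α)]
      exact mul_le_mul_of_nonneg_left
        (Real.rpow_le_rpow (hposIoc s hs).le hs.2 (by linarith)) (norm_nonneg _)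
  have i2' : IntervalIntegrable (fun s => h'' s * s ^ α) volume t₀ T :=
    (intervalIntegrable_iff_integrableOn_Ioc_of_le hT).mpr i2
  have R1 : (∫ s in t₀..T, h'' s * ((fun t : ℝ => t ^ α) T - (fun t : ℝ => t ^ α) s))
      = (h' T - c) * T ^ α - ∫ s in t₀..T, h'' s * s ^ α := by
    have : (∫ s in t₀..T, h'' s * ((fun t : ℝ => t ^ α) T - (fun t : ℝ => t ^ α) s))
        = ∫ s in t₀..T, (h'' s * T ^ α - h'' s * s ^ α) := by
      apply intervalIntegral.integral_congr; intro x _; simp only; ring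
    rw [this, intervalIntegral.integral_sub ((hA T hT).mul_const _) i2',
      intervalIntegral.integral_mul_const]
    congr 1
    rw [show (∫ s in t₀..T, h'' s) = h' T - c by rw [hfund T hT]; ring]
  -- key identity
  have keyid : (∫ t in t₀..T, α * t ^ (α-1) * h' t) + (∫ s in t₀..T, h'' s * s ^ α)
      = T ^ α * h' T - t₀ ^ α * c := by
    rw [L1, L2, R1, I3] at P1
    linear_combination P1
  -- comparison with g
  have iLHS : IntervalIntegrable (fun t => α * t ^ (α-1) * h' t + h'' t * t ^ α) volume t₀ T :=
    ih'.add i2'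
  have hgIoc : IntegrableOn g (Set.Ioc t₀ T) :=
    hgint.mono_set (fun x hx => le_of_lt hx.1)
  have iRHS : IntervalIntegrable (fun t => t ^ (α-1) * g t) volume t₀ T := by
    rw [intervalIntegrable_iff_integrableOn_Ioc_of_le hT]
    apply Integrable.mono' (hgIoc.const_mul (T ^ (α-1)))
    · exact (((hcont_pow (α-1)).mono Set.Ioc_subset_Icc_self).aestronglyMeasurable
        measurableSet_Ioc).mul hgIoc.aestronglyMeasurable
    · filter_upwards [ae_restrict_mem measurableSet_Ioc] with s hs
      rw [Real.norm_of_nonneg (mul_nonneg (Real.rpow_nonneg (hposIoc s hs).le _) (hg0 s))]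
      exact mul_le_mul_of_nonneg_right
        (Real.rpow_le_rpow (hposIoc s hs).le hs.2 (by linarith)) (hg0 s)
  have hmono : (∫ t in t₀..T, (α * t ^ (α-1) * h' t + h'' t * t ^ α))
      ≤ ∫ t in t₀..T, t ^ (α-1) * g t := by
    apply intervalIntegral.integral_mono_ae_restrict hT iLHS iRHS
    have hineq' := ae_restrict_of_ae_restrict_of_subset
      (fun x (hx : x ∈ Set.Icc t₀ T) => hx.1) hineq
    filter_upwards [hineq', ae_restrict_mem measurableSet_Icc] with t h1 h2
    have ht0 : (0:ℝ) < t := hpos t h2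
    have hta : t ^ α = t ^ (α-1) * t := by
      rw [show α = α - 1 + 1 by ring, Real.rpow_add_one (ne_of_gt ht0)]
      ring_nf
    have hnn : (0:ℝ) ≤ t ^ (α-1) := Real.rpow_nonneg ht0.le _
    calc α * t ^ (α-1) * h' t + h'' t * t ^ α
        = t ^ (α-1) * (t * h'' t + α * h' t) := by rw [hta]; ring
      _ ≤ t ^ (α-1) * g t := mul_le_mul_of_nonneg_left h1 hnn
  have hsplit : (∫ t in t₀..T, (α * t ^ (α-1) * h' t + h'' t * t ^ α))
      = (∫ t in t₀..T, α * t ^ (α-1) * h' t) + (∫ s in t₀..T, h'' s * s ^ α) :=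
    intervalIntegral.integral_add ih' i2'
  rw [hsplit, keyid] at hmono
  linarith

lemma caseA_bound (t₀ : ℝ) (ht₀ : 0 < t₀) (α : ℝ) (hα : 1 < α)
    (h' h'' g : ℝ → ℝ)
    (hc : ContinuousOn h' (Set.Ici t₀))
    (hfund : ∀ t ∈ Set.Ici t₀, h' t = h' t₀ + ∫ s in t₀..t, h'' s)
    (hg0 : ∀ t, 0 ≤ g t)
    (hgint : IntegrableOn g (Set.Ici t₀))
    (hineq : ∀ᵐ t ∂(volume.restrict (Set.Ici t₀)), t * h'' t + α * h' t ≤ g t)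
    (hA : ∀ T, t₀ ≤ T → IntervalIntegrable h'' volume t₀ T)
    (T : ℝ) (hT : t₀ ≤ T) :
    (∫ t in t₀..T, max (h' t) 0)
      ≤ |t₀ ^ α * h' t₀| * (t₀ ^ (1-α) / (α-1)) + (∫ s in Set.Ioi t₀, g s) / (α-1) := by
  set A := t₀ ^ α * h' t₀ with hAdef
  set G := ∫ s in Set.Ioi t₀, g s with hGdef
  have hα1 : (0:ℝ) < α - 1 := by linarith
  have hne1 : (1:ℝ) - α ≠ 0 := by linarith
  have hpos : ∀ x ∈ Set.Icc t₀ T, (0:ℝ) < x := fun x hx => lt_of_lt_of_le ht₀ hx.1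
  have hposIoc : ∀ x ∈ Set.Ioc t₀ T, (0:ℝ) < x := fun x hx => lt_trans ht₀ hx.1
  have hcont_pow : ∀ (e : ℝ), ContinuousOn (fun t : ℝ => t ^ e) (Set.Icc t₀ T) :=
    fun e => continuousOn_id.rpow_const (fun x hx => Or.inl (ne_of_gt (hpos x hx)))
  -- the inner primitive I4
  set I4 : ℝ → ℝ := fun t => ∫ s in t₀..t, s ^ (α-1) * g s with hI4def
  have hgIoc : IntegrableOn g (Set.Ioc t₀ T) := hgint.mono_set (fun x hx => le_of_lt hx.1)
  have hk2 : IntegrableOn (fun s => s ^ (α-1) * g s) (Set.Ioc t₀ T) := by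
    apply Integrable.mono' (hgIoc.const_mul (T ^ (α-1)))
    · exact (((hcont_pow (α-1)).mono Set.Ioc_subset_Icc_self).aestronglyMeasurable
        measurableSet_Ioc).mul hgIoc.aestronglyMeasurable
    · filter_upwards [ae_restrict_mem measurableSet_Ioc] with s hs
      rw [Real.norm_of_nonneg (mul_nonneg (Real.rpow_nonneg (hposIoc s hs).le _) (hg0 s))]
      exact mul_le_mul_of_nonneg_right
        (Real.rpow_le_rpow (hposIoc s hs).le hs.2 (by linarith)) (hg0 s)
  have hk2Icc : IntegrableOn (fun s => s ^ (α-1) * g s) (Set.Icc t₀ T) :=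
    (integrableOn_Icc_iff_integrableOn_Ioc).mpr hk2
  have hI4cont : ContinuousOn I4 (Set.Icc t₀ T) := by
    have := intervalIntegral.continuousOn_primitive_interval
      (f := fun s => s ^ (α-1) * g s) (a := t₀) (b := T) (μ := volume)
      (by rwa [Set.uIcc_of_le hT])
    rwa [Set.uIcc_of_le hT] at this
  have hI40 : ∀ t ∈ Set.Icc t₀ T, 0 ≤ I4 t := fun t ht =>
    intervalIntegral.integral_nonneg ht.1
      (fun s hs => mul_nonneg (Real.rpow_nonneg (le_of_lt (lt_of_lt_of_le ht₀ hs.1)) _) (hg0 s))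
  -- the key pointwise bound
  have hkey : ∀ t ∈ Set.Icc t₀ T, max (h' t) 0 ≤ (|A| + I4 t) * t ^ (-α) := by
    intro t ht
    have ht0 : (0:ℝ) < t := hpos t ht
    have htα : (0:ℝ) < t ^ α := Real.rpow_pos_of_pos ht0 α
    have hkt := caseA_key t₀ ht₀ α hα h' h'' g hc hfund hg0 hgint hineq hA t ht.1
    have hrw : t ^ (-α) = (t ^ α)⁻¹ := Real.rpow_neg ht0.le α
    have hRnn : 0 ≤ (|A| + I4 t) * t ^ (-α) :=
      mul_nonneg (add_nonneg (abs_nonneg _) (hI40 t ht)) (Real.rpow_nonneg ht0.le _)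
    apply max_le ?_ hRnn
    have h1 : t ^ α * h' t ≤ |A| + I4 t := le_trans hkt (by
      have := le_abs_self A
      simp only [hI4def]
      linarith)
    calc h' t = (t ^ α * h' t) * (t ^ α)⁻¹ := by field_simp
      _ ≤ (|A| + I4 t) * (t ^ α)⁻¹ := by
          apply mul_le_mul_of_nonneg_right h1 (inv_nonneg.mpr htα.le)
      _ = (|A| + I4 t) * t ^ (-α) := by rw [hrw]
  -- integrate the pointwise bound
  have imax : IntervalIntegrable (fun t => max (h' t) 0) volume t₀ T :=
    ContinuousOn.intervalIntegrable_of_Icc hT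
      ((hc.mono (fun x (hx : x ∈ Set.Icc t₀ T) => hx.1)).sup continuousOn_const)
  have iR : IntervalIntegrable (fun t => (|A| + I4 t) * t ^ (-α)) volume t₀ T :=
    ContinuousOn.intervalIntegrable_of_Icc hT
      ((continuousOn_const.add hI4cont).mul (hcont_pow (-α)))
  have step1 : (∫ t in t₀..T, max (h' t) 0) ≤ ∫ t in t₀..T, (|A| + I4 t) * t ^ (-α) :=
    intervalIntegral.integral_mono_on hT imax iR hkey
  have iA : IntervalIntegrable (fun t : ℝ => |A| * t ^ (-α)) volume t₀ T :=
    ContinuousOn.intervalIntegrable_of_Icc hT (continuousOn_const.mul (hcont_pow (-α)))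
  have iQ : IntervalIntegrable (fun t : ℝ => t ^ (-α) * I4 t) volume t₀ T :=
    ContinuousOn.intervalIntegrable_of_Icc hT ((hcont_pow (-α)).mul hI4cont)
  have hsplit : (∫ t in t₀..T, (|A| + I4 t) * t ^ (-α))
      = |A| * (∫ t in t₀..T, t ^ (-α)) + (∫ t in t₀..T, t ^ (-α) * I4 t) := by
    rw [show (∫ t in t₀..T, (|A| + I4 t) * t ^ (-α))
        = ∫ t in t₀..T, (|A| * t ^ (-α) + t ^ (-α) * I4 t) from
      intervalIntegral.integral_congr (fun x _ => by ring),
      intervalIntegral.integral_add iA iQ, intervalIntegral.integral_const_mul]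
  -- the power integral
  have hu2 : ∀ x ∈ Set.Icc t₀ T, HasDerivAt (fun t : ℝ => t ^ (1-α) / (1-α)) (x ^ (-α)) x := by
    intro x hx
    have h0 := (Real.hasDerivAt_rpow_const (x := x) (p := 1-α)
      (Or.inl (ne_of_gt (hpos x hx)))).div_const (1-α)
    refine h0.congr_deriv ?_
    rw [show (1:ℝ)-α-1 = -α by ring]
    field_simp
  have hpow : (∫ t in t₀..T, t ^ (-α)) = T ^ (1-α) / (1-α) - t₀ ^ (1-α) / (1-α) := by
    apply intervalIntegral.integral_eq_sub_of_hasDerivAt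
    · intro x hx
      rw [Set.uIcc_of_le hT] at hx
      exact hu2 x hx
    · exact ContinuousOn.intervalIntegrable_of_Icc hT (hcont_pow (-α))
  have hTn : (0:ℝ) ≤ T ^ (1-α) := Real.rpow_nonneg (le_trans ht₀.le hT) _
  have htn : (0:ℝ) ≤ t₀ ^ (1-α) := Real.rpow_nonneg ht₀.le _
  have hflip : -(t₀ ^ (1-α) / (1-α)) = t₀ ^ (1-α) / (α-1) := by field_simp; ring
  have hpow_le : (∫ t in t₀..T, t ^ (-α)) ≤ t₀ ^ (1-α) / (α-1) := by
    rw [hpow]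
    have h1 : T ^ (1-α) / (1-α) ≤ 0 := div_nonpos_of_nonneg_of_nonpos hTn (by linarith)
    linarith
  have hpow_nn : (0:ℝ) ≤ ∫ t in t₀..T, t ^ (-α) :=
    intervalIntegral.integral_nonneg hT
      (fun s hs => Real.rpow_nonneg (le_trans ht₀.le hs.1) _)
  -- integration by parts for the second term
  have P2 := parts_aux t₀ T hT (fun s => s ^ (α-1) * g s)
    (fun t => t ^ (1-α) / (1-α)) (fun t => t ^ (-α)) hk2 hu2 (hcont_pow (-α))
  have habs : ∀ x ∈ Set.Icc t₀ T, |x ^ (1-α) / (1-α)| ≤ t₀ ^ (1-α) / (α-1) := by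
    intro x hx
    rw [abs_div, abs_of_nonneg (Real.rpow_nonneg (hpos x hx).le _),
      abs_of_neg (show (1:ℝ)-α < 0 by linarith), show -((1:ℝ)-α) = α-1 by ring]
    exact (div_le_div_iff_of_pos_right hα1).mpr
      (Real.rpow_le_rpow_of_nonpos ht₀ hx.1 (by linarith))
  have ik2u : IntervalIntegrable
      (fun s => (s ^ (α-1) * g s) * ((fun t : ℝ => t ^ (1-α) / (1-α)) T -
        (fun t : ℝ => t ^ (1-α) / (1-α)) s)) volume t₀ T := by
    rw [intervalIntegrable_iff_integrableOn_Ioc_of_le hT]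
    apply Integrable.mono' (hk2.norm.mul_const (2 * (t₀ ^ (1-α) / (α-1))))
    · exact hk2.aestronglyMeasurable.mul
        (((continuousOn_const.sub ((hcont_pow (1-α)).div_const (1-α))).mono
          Set.Ioc_subset_Icc_self).aestronglyMeasurable measurableSet_Ioc)
    · filter_upwards [ae_restrict_mem measurableSet_Ioc] with s hs
      rw [norm_mul]
      apply mul_le_mul_of_nonneg_left ?_ (norm_nonneg _)
      have hsa := habs s (Set.Ioc_subset_Icc_self hs)
      have hTa := habs T ⟨hT, le_rfl⟩
      calc ‖T ^ (1-α) / (1-α) - s ^ (1-α) / (1-α)‖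
          ≤ |T ^ (1-α) / (1-α)| + |s ^ (1-α) / (1-α)| := abs_sub _ _
        _ ≤ 2 * (t₀ ^ (1-α) / (α-1)) := by linarith
  have ig1 : IntervalIntegrable (fun s => g s / (α-1)) volume t₀ T := by
    rw [intervalIntegrable_iff_integrableOn_Ioc_of_le hT]
    exact hgIoc.div_const _
  have bound2 : (∫ s in t₀..T, (s ^ (α-1) * g s) * ((fun t : ℝ => t ^ (1-α) / (1-α)) T -
        (fun t : ℝ => t ^ (1-α) / (1-α)) s)) ≤ ∫ s in t₀..T, g s / (α-1) := by
    apply intervalIntegral.integral_mono_on hT ik2u ig1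
    intro s hs
    have hs0 : (0:ℝ) < s := hpos s hs
    have e1 : (0:ℝ) ≤ s ^ (α-1) * g s :=
      mul_nonneg (Real.rpow_nonneg hs0.le _) (hg0 s)
    have e2 : (fun t : ℝ => t ^ (1-α) / (1-α)) T - (fun t : ℝ => t ^ (1-α) / (1-α)) s
        ≤ s ^ (1-α) / (α-1) := by
      simp only
      have h1 : T ^ (1-α) / (1-α) ≤ 0 := div_nonpos_of_nonneg_of_nonpos hTn (by linarith)
      have h2 : -(s ^ (1-α) / (1-α)) = s ^ (1-α) / (α-1) := by field_simp; ring
      linarith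
    calc (s ^ (α-1) * g s) * ((fun t : ℝ => t ^ (1-α) / (1-α)) T -
          (fun t : ℝ => t ^ (1-α) / (1-α)) s)
        ≤ (s ^ (α-1) * g s) * (s ^ (1-α) / (α-1)) := mul_le_mul_of_nonneg_left e2 e1
      _ = (s ^ (α-1) * s ^ (1-α)) * g s / (α-1) := by ring
      _ = g s / (α-1) := by
          rw [← Real.rpow_add hs0, show α - 1 + (1-α) = 0 by ring, Real.rpow_zero, one_mul]
  have bound3 : (∫ s in t₀..T, g s / (α-1)) ≤ G / (α-1) := by
    rw [intervalIntegral.integral_div, div_le_div_iff_of_pos_right hα1,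
      intervalIntegral.integral_of_le hT]
    exact setIntegral_mono_set (hgint.mono_set Set.Ioi_subset_Ici_self)
      (Filter.Eventually.of_forall hg0) (Set.Ioc_subset_Ioi_self.eventuallyLE)
  have m1 : |A| * (∫ t in t₀..T, t ^ (-α)) ≤ |A| * (t₀ ^ (1-α) / (α-1)) :=
    mul_le_mul_of_nonneg_left hpow_le (abs_nonneg A)
  rw [P2] at hsplit
  linarith

lemma conv_aux (t₀ : ℝ) (h h' : ℝ → ℝ) (hbd : BddBelow (h '' Set.Ici t₀))
    (hd : ∀ t ∈ Set.Ici t₀, HasDerivAt h (h' t) t)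
    (p : ℝ → ℝ) (hp : Continuous p) (hp0 : ∀ t, 0 ≤ p t)
    (hph : ∀ t ∈ Set.Ici t₀, h' t ≤ p t)
    (hpint : IntegrableOn p (Set.Ioi t₀)) :
    ∃ l, Filter.Tendsto h Filter.atTop (nhds l) := by
  obtain ⟨m, hm⟩ := hbd
  rw [mem_lowerBounds] at hm
  set F : ℝ → ℝ := fun t => ∫ s in t₀..t, p s with hF
  set L : ℝ := ∫ s in Set.Ioi t₀, p s with hL
  have hFL : Filter.Tendsto F Filter.atTop (nhds L) :=
    intervalIntegral_tendsto_integral_Ioi t₀ hpint Filter.tendsto_id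
  have hFd : ∀ t, HasDerivAt F (p t) t := fun t =>
    (hp.integral_hasStrictDerivAt t₀ t).hasDerivAt
  have hFle : ∀ t, t₀ ≤ t → F t ≤ L := by
    intro t ht
    show (∫ s in t₀..t, p s) ≤ ∫ s in Set.Ioi t₀, p s
    rw [intervalIntegral.integral_of_le ht]
    exact setIntegral_mono_set hpint
      (Filter.Eventually.of_forall fun s => hp0 s)
      (Set.Ioc_subset_Ioi_self.eventuallyLE)
  have hF0 : ∀ t, t₀ ≤ t → 0 ≤ F t := fun t ht =>
    intervalIntegral.integral_nonneg ht fun s _ => hp0 s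
  set H : ℝ → ℝ := fun t => h t - F t with hH
  have hHanti : AntitoneOn H (Set.Ici t₀) := by
    have hconv : Convex ℝ (Set.Ici t₀) := convex_Ici t₀
    refine AntitoneOn.mono ?_ (le_refl (Set.Ici t₀))
    apply antitoneOn_of_deriv_nonpos hconv
    · intro x hx
      exact (((hd x hx).sub (hFd x)).continuousAt).continuousWithinAt
    · intro x hx
      rw [interior_Ici] at hx
      exact (((hd x (Set.Ioi_subset_Ici_self hx)).sub (hFd x))).differentiableAt.differentiableWithinAt
    · intro x hx
      rw [interior_Ici] at hx
      rw [show deriv H x = h' x - p x from ((hd x (Set.Ioi_subset_Ici_self hx)).sub (hFd x)).deriv]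
      have := hph x (Set.Ioi_subset_Ici_self hx)
      linarith
  -- shifted version is globally antitone
  set K : ℝ → ℝ := fun t => H (max t t₀) with hK
  have hKanti : Antitone K := by
    intro s t hst
    exact hHanti (le_max_right s t₀) (le_max_right t t₀) (max_le_max hst le_rfl)
  have hKbdd : BddBelow (Set.range K) := by
    refine ⟨m - L, ?_⟩
    rintro x ⟨t, rfl⟩
    have h1 : m ≤ h (max t t₀) := hm _ ⟨max t t₀, Set.mem_Ici.mpr (le_max_right t t₀), rfl⟩
    have h2 : F (max t t₀) ≤ L := hFle _ (le_max_right t t₀)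
    simp only [hK, hH]
    linarith
  have hKlim : Filter.Tendsto K Filter.atTop (nhds (⨅ t, K t)) :=
    tendsto_atTop_ciInf hKanti hKbdd
  have hHlim : Filter.Tendsto H Filter.atTop (nhds (⨅ t, K t)) := by
    apply hKlim.congr'
    filter_upwards [Filter.eventually_ge_atTop t₀] with t ht
    simp [hK, max_eq_left ht]
  have : Filter.Tendsto h Filter.atTop (nhds ((⨅ t, K t) + L)) := by
    have := hHlim.add hFL
    apply this.congr
    intro t
    simp [hH]
  exact ⟨_, this⟩

theorem stmt_19 (t₀ : ℝ) (ht₀ : 0 < t₀) (α : ℝ) (hα : 1 < α)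
    (h h' h'' g : ℝ → ℝ)
    (hbd : BddBelow (h '' Set.Ici t₀))
    (hd : ∀ t ∈ Set.Ici t₀, HasDerivAt h (h' t) t)
    (hc : ContinuousOn h' (Set.Ici t₀))
    (hfund : ∀ t ∈ Set.Ici t₀, h' t = h' t₀ + ∫ s in t₀..t, h'' s)
    (hae : ∀ᵐ t ∂(volume.restrict (Set.Ici t₀)), HasDerivAt h' (h'' t) t)
    (hg0 : ∀ t, 0 ≤ g t)
    (hgint : IntegrableOn g (Set.Ici t₀))
    (hineq : ∀ᵐ t ∂(volume.restrict (Set.Ici t₀)), t * h'' t + α * h' t ≤ g t) :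
    ∃ l : ℝ, Filter.Tendsto h Filter.atTop (nhds l) := by
  by_cases hA : ∀ T, t₀ ≤ T → IntervalIntegrable h'' volume t₀ T
  · -- Case A : h'' locally integrable
    set p : ℝ → ℝ := fun t => max (h' (max t t₀)) 0 with hpdef
    have hpc : Continuous p := by
      apply Continuous.max ?_ continuous_const
      exact hc.comp_continuous (continuous_id.max continuous_const)
        (fun x => le_max_right x t₀)
    have hp0 : ∀ t, 0 ≤ p t := fun t => le_max_right _ _
    have hpeq : ∀ t, t₀ ≤ t → p t = max (h' t) 0 := by
      intro t ht; simp [hpdef, max_eq_left ht]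
    have hpint : IntegrableOn p (Set.Ioi t₀) := by
      apply integrableOn_Ioi_of_intervalIntegral_norm_bounded
        (|t₀ ^ α * h' t₀| * (t₀ ^ (1-α) / (α-1)) + (∫ s in Set.Ioi t₀, g s) / (α-1))
        t₀ (fun T : ℝ => hpc.integrableOn_Ioc) Filter.tendsto_id
      filter_upwards [Filter.eventually_ge_atTop t₀] with T hT
      show (∫ x in t₀..T, ‖p x‖) ≤ _
      have : (∫ x in t₀..T, ‖p x‖) = ∫ x in t₀..T, max (h' x) 0 := by
        apply intervalIntegral.integral_congr
        intro x hx
        rw [Set.uIcc_of_le hT] at hx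
        show ‖p x‖ = max (h' x) 0
        rw [Real.norm_of_nonneg (hp0 x), hpeq x hx.1]
      rw [this]
      exact caseA_bound t₀ ht₀ α hα h' h'' g hc hfund hg0 hgint hineq hA T hT
    exact conv_aux t₀ h h' hbd hd p hpc hp0
      (fun t ht => by rw [hpeq t ht]; exact le_max_left _ _) hpint
  · -- Case B : h'' fails to be interval integrable somewhere
    push_neg at hA
    obtain ⟨T₂, hT₂, hni⟩ := hA
    set S : Set ℝ := {T | t₀ ≤ T ∧ ¬ IntervalIntegrable h'' volume t₀ T} with hSdef
    have hSne : S.Nonempty := ⟨T₂, hT₂, hni⟩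
    have hSbdd : BddBelow S := ⟨t₀, fun x hx => hx.1⟩
    set T' : ℝ := sInf S with hT'def
    have hT'ge : t₀ ≤ T' := le_csInf hSne (fun x hx => hx.1)
    set c : ℝ := h' t₀ with hcdef
    have hconst : ∀ t, T' < t → h' t = c := by
      intro t ht
      obtain ⟨T, hTS, hTt⟩ := exists_lt_of_csInf_lt hSne ht
      have : ¬ IntervalIntegrable h'' volume t₀ t := by
        intro hint
        exact hTS.2 (hint.mono_set (by
          rw [Set.uIcc_of_le hTS.1, Set.uIcc_of_le (hTS.1.trans hTt.le)]
          exact Set.Icc_subset_Icc le_rfl hTt.le))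
      rw [hfund t (le_trans hT'ge (le_of_lt ht) : t₀ ≤ t), intervalIntegral.integral_undef this,
        add_zero]
    set T₁ : ℝ := T' + 1 with hT₁def
    have hT₁gt : T' < T₁ := by simp [hT₁def]
    have hT₁ge : t₀ ≤ T₁ := le_trans hT'ge hT₁gt.le
    have hlin : ∀ t, T₁ ≤ t → h t = h T₁ + c * (t - T₁) := by
      intro t ht
      have hft : ∫ s in T₁..t, h' s = h t - h T₁ := by
        apply intervalIntegral.integral_eq_sub_of_hasDerivAt
        · intro x hx
          rw [Set.uIcc_of_le ht] at hx
          exact hd x (le_trans hT₁ge hx.1)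
        · apply ContinuousOn.intervalIntegrable_of_Icc ht
          exact hc.mono (fun x hx => le_trans hT₁ge hx.1)
      have hcongr : (∫ s in T₁..t, h' s) = ∫ s in T₁..t, c := by
        apply intervalIntegral.integral_congr
        intro x hx
        rw [Set.uIcc_of_le ht] at hx
        exact hconst x (lt_of_lt_of_le hT₁gt hx.1)
      rw [hcongr, intervalIntegral.integral_const, smul_eq_mul] at hft
      linarith
    obtain ⟨m, hm⟩ := hbd
    rw [mem_lowerBounds] at hm
    have hc0 : 0 ≤ c := by
      by_contra hneg
      push_neg at hneg
      have hht : m ≤ h T₁ := hm _ ⟨T₁, Set.mem_Ici.mpr hT₁ge, rfl⟩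
      have hcne : c ≠ 0 := ne_of_lt hneg
      have hd1 : 0 < (h T₁ - m + 1) / (-c) := div_pos (by linarith) (by linarith)
      have htge : T₁ ≤ T₁ + (h T₁ - m + 1) / (-c) := by linarith
      have hval := hlin _ htge
      have hcx : c * (T₁ + (h T₁ - m + 1) / (-c) - T₁) = -(h T₁ - m + 1) := by
        field_simp
        ring
      have hmle : m ≤ h (T₁ + (h T₁ - m + 1) / (-c)) :=
        hm _ ⟨_, Set.mem_Ici.mpr (le_trans hT₁ge htge), rfl⟩
      rw [hval, hcx] at hmle
      linarith
    have hc1 : c ≤ 0 := by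
      by_contra hneg
      push_neg at hneg
      have hsub : Set.Ioi T₁ ⊆ Set.Ici t₀ := fun x hx => le_trans hT₁ge (le_of_lt hx)
      have hae' := ae_restrict_of_ae_restrict_of_subset hsub hae
      have hineq' := ae_restrict_of_ae_restrict_of_subset hsub hineq
      have hgc : ∀ᵐ t ∂(volume.restrict (Set.Ioi T₁)), α * c ≤ g t := by
        filter_upwards [hae', hineq', ae_restrict_mem measurableSet_Ioi] with t h1 h2 h3
        have hloc : h' =ᶠ[nhds t] (fun _ => c) := by
          have : Set.Ioi T' ∈ nhds t := Ioi_mem_nhds (lt_of_lt_of_le hT₁gt (le_of_lt h3))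
          filter_upwards [this] with s hs
          exact hconst s hs
        have hzero : HasDerivAt h' 0 t :=
          (hasDerivAt_const t c).congr_of_eventuallyEq hloc
        have : h'' t = 0 := h1.unique hzero
        rw [this, mul_zero, zero_add, hconst t (lt_of_lt_of_le hT₁gt (le_of_lt h3))] at h2
        exact h2
      have hmono : Integrable (fun _ : ℝ => α * c) (volume.restrict (Set.Ioi T₁)) := by
        apply Integrable.mono' (hgint.mono_set hsub) aestronglyMeasurable_const
        filter_upwards [hgc] with t hgt
        rw [Real.norm_of_nonneg (by positivity)]
        exact hgt
      rw [integrable_const_iff] at hmono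
      rcases hmono with hz | hfin
      · have : (0:ℝ) < α * c := by positivity
        rw [hz] at this; exact lt_irrefl 0 this
      · have hfin' := measure_lt_top (volume.restrict (Set.Ioi T₁)) Set.univ
        rw [Measure.restrict_apply_univ, Real.volume_Ioi] at hfin'
        exact (lt_irrefl _ hfin')
    have hceq : c = 0 := le_antisymm hc1 hc0
    refine ⟨h T₁, ?_⟩
    apply Filter.Tendsto.congr' ?_ tendsto_const_nhds
    filter_upwards [Filter.eventually_ge_atTop T₁] with t ht
    rw [hlin t ht, hceq]
    ring
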